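/- Let n ≥ 1 and let α_0 < α_1 < … < α_n be real numbers. Then every nonzero linear combination f(x) = Σ_{i=0}^n a_i · x^{α_i} (with real coefficients a_i not all zero) has at most n zeros in (0, ∞). Equivalently, the family (x^{α_0}, …, x^{α_n}) of real power functions is a T-system of order n on every subset of (0, ∞) with at least n+1 elements. -/

import Mathlib

/-- A family `f 0, …, f (k-1)` of real-valued functions on `X` is a T-system of
order `n` on the set `S ⊆ X` if every nontrivial linear combination has at most
`n` zeros in `S`. -/
def IsTSystemOn {X : Type*} {k : ℕ} (n : ℕ) (f : Fin k → X → ℝ) (S : Set X) : Prop :=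
  ∀ a : Fin k → ℝ, a ≠ 0 → {x ∈ S | ∑ i, a i * f i x = 0}.encard ≤ (n : ℕ∞)

open Set Real in
private lemma rpow_comb_hasDerivAt {k : ℕ} (a β : Fin k → ℝ) {x : ℝ} (hx : 0 < x) :
    HasDerivAt (fun y : ℝ => ∑ i, a i * y ^ (β i))
      (∑ i, a i * (β i * x ^ (β i - 1))) x :=
  HasDerivAt.fun_sum fun i _ =>
    (Real.hasDerivAt_rpow_const (p := β i) (Or.inl hx.ne')).const_mul (a i)

private lemma powers_zeros_le : ∀ (k : ℕ) (α : Fin (k + 1) → ℝ), StrictMono α →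
    ∀ a : Fin (k + 1) → ℝ, a ≠ 0 →
    {x ∈ Set.Ioi (0 : ℝ) | ∑ i, a i * x ^ (α i) = 0}.encard ≤ (k : ℕ∞) := by
  intro k
  induction k with
  | zero =>
    intro α hα a ha
    have ha0 : a 0 ≠ 0 := by
      intro h
      exact ha (funext fun i => by fin_cases i; exact h)
    have hempty : {x ∈ Set.Ioi (0 : ℝ) | ∑ i, a i * x ^ (α i) = 0} = ∅ := by
      rw [Set.eq_empty_iff_forall_notMem]
      rintro x ⟨hx, hsum⟩
      rw [Fin.sum_univ_succ, Fin.sum_univ_zero, add_zero] at hsum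
      exact mul_ne_zero ha0 (Real.rpow_pos_of_pos hx (α 0)).ne' hsum
    rw [hempty, Set.encard_empty]
    exact zero_le
  | succ k ih =>
    intro α hα a ha
    -- g is f divided by x ^ (α 0)
    set g : ℝ → ℝ := fun y => ∑ i, a i * y ^ (α i - α 0) with hg
    have hset : {x ∈ Set.Ioi (0 : ℝ) | ∑ i, a i * x ^ (α i) = 0}
        = {x ∈ Set.Ioi (0 : ℝ) | g x = 0} := by
      ext x
      simp only [Set.mem_setOf_eq, Set.mem_Ioi, and_congr_right_iff]
      intro hx
      have hfact : ∑ i, a i * x ^ (α i) = x ^ (α 0) * g x := by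
        rw [hg, Finset.mul_sum]
        refine Finset.sum_congr rfl fun i _ => ?_
        rw [← mul_assoc, mul_comm (x ^ (α 0)) (a i), mul_assoc,
          ← Real.rpow_add hx]
        ring_nf
      rw [hfact, mul_eq_zero]
      have : x ^ (α 0) ≠ 0 := (Real.rpow_pos_of_pos hx (α 0)).ne'
      tauto
    rw [hset]
    -- coefficients of the derivative
    set b : Fin (k + 1) → ℝ := fun i => a i.succ * (α i.succ - α 0) with hb
    set γ : Fin (k + 1) → ℝ := fun i => α i.succ - α 0 - 1 with hγ
    have hγmono : StrictMono γ := fun i j hij => by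
      have : α i.succ < α j.succ := hα (Fin.succ_lt_succ_iff.mpr hij)
      simp only [hγ]; linarith
    have hderiv : ∀ x : ℝ, 0 < x → deriv g x = ∑ i, b i * x ^ (γ i) := by
      intro x hx
      rw [(rpow_comb_hasDerivAt a (fun i => α i - α 0) hx).deriv,
        Fin.sum_univ_succ]
      simp only [sub_self, Real.rpow_zero, zero_mul, mul_zero, zero_add]
      exact Finset.sum_congr rfl fun i _ => by rw [hb, hγ]; ring
    by_cases hb0 : b = 0
    · -- then a i.succ = 0 for all i, so f x = a 0 * x ^ α 0 never vanishes
      have hsucc : ∀ i : Fin (k + 1), a i.succ = 0 := by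
        intro i
        have h1 : a i.succ * (α i.succ - α 0) = 0 := congrFun hb0 i
        have h2 : α 0 < α i.succ := hα (Fin.succ_pos i)
        rcases mul_eq_zero.mp h1 with h | h
        · exact h
        · linarith
      have ha0 : a 0 ≠ 0 := by
        intro h
        apply ha
        funext i
        rcases Fin.eq_zero_or_eq_succ i with rfl | ⟨j, rfl⟩
        · exact h
        · exact hsucc j
      have hA : ∀ i : Fin (k + 2), i ≠ 0 → a i = 0 := by
        intro i hi
        rcases Fin.eq_zero_or_eq_succ i with rfl | ⟨j, rfl⟩
        · exact absurd rfl hi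
        · exact hsucc j
      have hempty : {x ∈ Set.Ioi (0 : ℝ) | g x = 0} = ∅ := by
        rw [Set.eq_empty_iff_forall_notMem]
        rintro x ⟨hx, hgx⟩
        have : g x = a 0 := by
          show (∑ i, a i * x ^ (α i - α 0)) = a 0
          rw [Finset.sum_eq_single 0]
          · simp
          · intro i _ hi; rw [hA i hi, zero_mul]
          · simp
        rw [this] at hgx
        exact ha0 hgx
      rw [hempty, Set.encard_empty]
      exact zero_le
    · -- main case: Rolle + induction hypothesis
      by_contra hcon
      push_neg at hcon
      have hle : ((k + 2 : ℕ) : ℕ∞) ≤ {x ∈ Set.Ioi (0 : ℝ) | g x = 0}.encard := by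
        have h1 : ((k + 1 : ℕ) : ℕ∞) + 1 ≤ {x ∈ Set.Ioi (0 : ℝ) | g x = 0}.encard :=
          (ENat.add_one_le_iff (ENat.coe_ne_top _)).mpr hcon
        rwa [show ((k + 2 : ℕ) : ℕ∞) = ((k + 1 : ℕ) : ℕ∞) + 1 by push_cast; ring]
      obtain ⟨t, hts, htcard⟩ := Set.exists_subset_encard_eq hle
      have htfin : t.Finite := Set.finite_of_encard_eq_coe htcard
      have hucard : htfin.toFinset.card = k + 2 := by
        have := htfin.encard_eq_coe_toFinset_card
        rw [htcard] at this
        exact_mod_cast this.symm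
      set e := htfin.toFinset.orderIsoOfFin hucard with he
      set p : Fin (k + 2) → ℝ := fun i => (e i : ℝ) with hp
      have hpmono : StrictMono p := fun i j hij => e.strictMono hij
      have hpz : ∀ i, p i ∈ {x ∈ Set.Ioi (0 : ℝ) | g x = 0} := by
        intro i
        apply hts
        have : (e i : ℝ) ∈ htfin.toFinset := (e i).2
        rwa [htfin.mem_toFinset] at this
      have hppos : ∀ i, 0 < p i := fun i => (hpz i).1
      have hRolle : ∀ i : Fin (k + 1), ∃ c ∈ Set.Ioo (p i.castSucc) (p i.succ),
          deriv g c = 0 := by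
        intro i
        refine exists_deriv_eq_zero (hpmono (Fin.castSucc_lt_succ (i := i))) ?_ ?_
        · intro y hy
          have hy0 : 0 < y := lt_of_lt_of_le (hppos i.castSucc) hy.1
          exact ((rpow_comb_hasDerivAt a (fun i => α i - α 0)
            hy0).differentiableAt.continuousAt).continuousWithinAt
        · rw [(hpz i.castSucc).2, (hpz i.succ).2]
      choose c hc hcz using hRolle
      have hcmono : StrictMono c := by
        intro i j hij
        have h1 : c i < p i.succ := (hc i).2
        have h2 : p j.castSucc < c j := (hc j).1
        have h3 : p i.succ ≤ p j.castSucc := by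
          apply hpmono.monotone
          simp only [Fin.le_def, Fin.val_succ, Fin.coe_castSucc]
          exact hij
        linarith
      have hczero : ∀ i, c i ∈ {x ∈ Set.Ioi (0 : ℝ) | ∑ j, b j * x ^ (γ j) = 0} := by
        intro i
        have hcpos : 0 < c i := lt_trans (hppos i.castSucc) (hc i).1
        refine ⟨hcpos, ?_⟩
        rw [← hderiv (c i) hcpos]
        exact hcz i
      have hrange : Set.range c ⊆ {x ∈ Set.Ioi (0 : ℝ) | ∑ j, b j * x ^ (γ j) = 0} := by
        rintro _ ⟨i, rfl⟩; exact hczero i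
      have hrc : (Set.range c).encard = ((k + 1 : ℕ) : ℕ∞) := by
        rw [← Set.image_univ, (hcmono.injective.injOn).encard_image, Set.encard_univ]
        simp
      have hfinal : ((k + 1 : ℕ) : ℕ∞) ≤ (k : ℕ∞) := by
        calc ((k + 1 : ℕ) : ℕ∞) = (Set.range c).encard := hrc.symm
          _ ≤ {x ∈ Set.Ioi (0 : ℝ) | ∑ j, b j * x ^ (γ j) = 0}.encard :=
              Set.encard_mono hrange
          _ ≤ (k : ℕ∞) := ih γ hγmono b hb0
      have : k + 1 ≤ k := by exact_mod_cast hfinal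
      omega

/-- for real exponents `α 0 < α 1 < … < α n`, every nontrivial linear
combination `x ↦ ∑ a i * x ^ (α i)` has at most `n` zeros in `(0,∞)`; equivalently,
the power functions `x ^ (α 0), …, x ^ (α n)` form a T-system of order `n` on every
subset of `(0,∞)` with at least `n + 1` elements. -/
theorem powers_tsystem_on_Ioi (n : ℕ) (hn : 1 ≤ n)
    (α : Fin (n + 1) → ℝ) (hα : StrictMono α) :
    (∀ a : Fin (n + 1) → ℝ, a ≠ 0 →
      {x ∈ Set.Ioi (0 : ℝ) | ∑ i, a i * x ^ (α i) = 0}.encard ≤ (n : ℕ∞)) ∧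
    (∀ S : Set ℝ, S ⊆ Set.Ioi 0 → (n + 1 : ℕ) ≤ S.encard →
      IsTSystemOn n (fun i (x : ℝ) => x ^ (α i)) S) := by
  constructor
  · exact powers_zeros_le n α hα
  · intro S hS _ a ha
    calc {x ∈ S | ∑ i, a i * x ^ (α i) = 0}.encard
        ≤ {x ∈ Set.Ioi (0 : ℝ) | ∑ i, a i * x ^ (α i) = 0}.encard :=
          Set.encard_mono fun x hx => ⟨hS hx.1, hx.2⟩
      _ ≤ (n : ℕ∞) := powers_zeros_le n α hα a ha
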